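/- (Doeblin's theorem) Let (S_t)_{t≥0} be a Markov (stochastic, mass- and positivity-preserving) semigroup on finite measures on Ω. If there exist α ∈ (0,1), a probability measure η, and a time τ > 0 such that S_τ μ ≥ α η for all probability measures μ, then S_t has a unique invariant probability measure μ_∞, and for any probability measure μ and all t ≥ 0, ‖S_t μ − μ_∞‖_TV ≤ C e^{−λ t} ‖μ − μ_∞‖_TV with C = 1/(1−α) and λ = −log(1−α)/τ. -/

import Mathlib

open MeasureTheory Real
open scoped ENNReal

/-- Total variation distance between two finite measures. -/
noncomputable def tvDist {Ω : Type*} [MeasurableSpace Ω] (μ ν : Measure Ω) : ℝ :=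
  ⨆ E : {E : Set Ω // MeasurableSet E}, |(μ E.1).toReal - (ν E.1).toReal|

namespace DoeblinAux

set_option linter.unusedSectionVars false

section Sec1


variable {Ω : Type*} [MeasurableSpace Ω]

lemma tvBdd (μ ν : Measure Ω) [IsFiniteMeasure μ] [IsFiniteMeasure ν] :
    BddAbove (Set.range fun E : {E : Set Ω // MeasurableSet E} =>
      |(μ E.1).toReal - (ν E.1).toReal|) := by
  refine ⟨(μ Set.univ).toReal + (ν Set.univ).toReal, ?_⟩
  rintro x ⟨E, rfl⟩
  have h1 : (μ E.1).toReal ≤ (μ Set.univ).toReal :=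
    ENNReal.toReal_mono (measure_ne_top _ _) (measure_mono (Set.subset_univ _))
  have h2 : (ν E.1).toReal ≤ (ν Set.univ).toReal :=
    ENNReal.toReal_mono (measure_ne_top _ _) (measure_mono (Set.subset_univ _))
  have h3 : (0:ℝ) ≤ (μ E.1).toReal := ENNReal.toReal_nonneg
  have h4 : (0:ℝ) ≤ (ν E.1).toReal := ENNReal.toReal_nonneg
  rw [abs_sub_le_iff]
  constructor <;> linarith

lemma le_tvDist (μ ν : Measure Ω) [IsFiniteMeasure μ] [IsFiniteMeasure ν]
    {E : Set Ω} (hE : MeasurableSet E) :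
    |(μ E).toReal - (ν E).toReal| ≤ tvDist μ ν :=
  le_ciSup (tvBdd μ ν) (⟨E, hE⟩ : {E : Set Ω // MeasurableSet E})

lemma tvDist_nonneg (μ ν : Measure Ω) [IsFiniteMeasure μ] [IsFiniteMeasure ν] :
    0 ≤ tvDist μ ν := by
  have := le_tvDist μ ν MeasurableSet.empty
  simpa using this

lemma tvDist_self (μ ν : Measure Ω) (h : μ = ν) : tvDist μ ν = 0 := by
  subst h
  have : ∀ E : {E : Set Ω // MeasurableSet E}, |(μ E.1).toReal - (μ E.1).toReal| = 0 := by
    intro E; simp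
  simp only [tvDist, this, ciSup_const]

lemma eq_of_tvDist_eq_zero (μ ν : Measure Ω) [IsProbabilityMeasure μ] [IsProbabilityMeasure ν]
    (h : tvDist μ ν = 0) : μ = ν := by
  ext E hE
  have h1 := le_tvDist μ ν hE
  rw [h, abs_nonpos_iff, sub_eq_zero] at h1
  exact (ENNReal.toReal_eq_toReal_iff' (measure_ne_top _ _) (measure_ne_top _ _)).mp h1

/-- transfer: from μ + q = ν + p, get real-valued identity on measurable sets. -/
lemma transfer {μ ν p q : Measure Ω} [IsFiniteMeasure μ] [IsFiniteMeasure ν]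
    [IsFiniteMeasure p] [IsFiniteMeasure q]
    (h : μ + q = ν + p) (E : Set Ω) :
    (μ E).toReal - (ν E).toReal = (p E).toReal - (q E).toReal := by
  have h1 : μ E + q E = ν E + p E := by
    have := congrArg (fun m : Measure Ω => m E) h
    simpa [Measure.add_apply] using this
  have h2 : (μ E).toReal + (q E).toReal = (ν E).toReal + (p E).toReal := by
    rw [← ENNReal.toReal_add (measure_ne_top _ _) (measure_ne_top _ _),
      ← ENNReal.toReal_add (measure_ne_top _ _) (measure_ne_top _ _), h1]
  linarith

lemma tvDist_le_of_add_eq_add {μ ν p q : Measure Ω} [IsFiniteMeasure μ] [IsFiniteMeasure ν]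
    [IsFiniteMeasure p] [IsFiniteMeasure q]
    (h : μ + q = ν + p) :
    tvDist μ ν ≤ max (p Set.univ).toReal (q Set.univ).toReal := by
  refine ciSup_le fun E => ?_
  have ht := transfer h E.1
  have h1 : (p E.1).toReal ≤ (p Set.univ).toReal :=
    ENNReal.toReal_mono (measure_ne_top _ _) (measure_mono (Set.subset_univ _))
  have h2 : (q E.1).toReal ≤ (q Set.univ).toReal :=
    ENNReal.toReal_mono (measure_ne_top _ _) (measure_mono (Set.subset_univ _))
  have h3 : (0:ℝ) ≤ (p E.1).toReal := ENNReal.toReal_nonneg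
  have h4 : (0:ℝ) ≤ (q E.1).toReal := ENNReal.toReal_nonneg
  rw [abs_sub_le_iff]
  constructor
  · calc (μ E.1).toReal - (ν E.1).toReal = (p E.1).toReal - (q E.1).toReal := ht
      _ ≤ (p Set.univ).toReal := by linarith
      _ ≤ _ := le_max_left _ _
  · calc (ν E.1).toReal - (μ E.1).toReal = (q E.1).toReal - (p E.1).toReal := by linarith
      _ ≤ (q Set.univ).toReal := by linarith
      _ ≤ _ := le_max_right _ _

/-- Jordan-type decomposition for a pair of probability measures. -/
lemma exists_jordan (μ ν : Measure Ω) [IsProbabilityMeasure μ] [IsProbabilityMeasure ν] :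
    ∃ p q : Measure Ω, IsFiniteMeasure p ∧ IsFiniteMeasure q ∧
      μ + q = ν + p ∧ p Set.univ = q Set.univ ∧ tvDist μ ν = (p Set.univ).toReal := by
  set s := μ.toSignedMeasure - ν.toSignedMeasure with hs
  set p := s.toJordanDecomposition.posPart with hp
  set q := s.toJordanDecomposition.negPart with hq
  have hsp : IsFiniteMeasure p := inferInstance
  have hsq : IsFiniteMeasure q := inferInstance
  have key : ∀ E : Set Ω, MeasurableSet E →
      (μ E).toReal - (ν E).toReal = (p E).toReal - (q E).toReal := by
    intro E hE
    have h0 : s.toJordanDecomposition.toSignedMeasure = s :=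
      s.toSignedMeasure_toJordanDecomposition
    have h1 := congrArg (fun m : SignedMeasure Ω => m E) h0
    rw [JordanDecomposition.toSignedMeasure] at h1
    rw [VectorMeasure.sub_apply, Measure.toSignedMeasure_apply_measurable hE,
      Measure.toSignedMeasure_apply_measurable hE] at h1
    rw [hs] at h1
    rw [VectorMeasure.sub_apply, Measure.toSignedMeasure_apply_measurable hE,
      Measure.toSignedMeasure_apply_measurable hE] at h1
    simp only [measureReal_def, ← hs, ← hp, ← hq] at h1
    linarith [h1]
  have hadd : μ + q = ν + p := by
    ext E hE
    have h2 := key E hE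
    have h3 : (μ E).toReal + (q E).toReal = (ν E).toReal + (p E).toReal := by linarith
    have h4 : ((μ + q) E).toReal = ((ν + p) E).toReal := by
      rw [Measure.add_apply, Measure.add_apply,
        ENNReal.toReal_add (measure_ne_top _ _) (measure_ne_top _ _),
        ENNReal.toReal_add (measure_ne_top _ _) (measure_ne_top _ _)]
      exact h3
    exact (ENNReal.toReal_eq_toReal_iff' (by simp [measure_ne_top]) (by simp [measure_ne_top])).mp h4
  have hmass : p Set.univ = q Set.univ := by
    have h2 := key Set.univ MeasurableSet.univ
    simp only [measure_univ, ENNReal.toReal_one, sub_self] at h2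
    have h3 : (p Set.univ).toReal = (q Set.univ).toReal := by linarith
    exact (ENNReal.toReal_eq_toReal_iff' (measure_ne_top _ _) (measure_ne_top _ _)).mp h3
  refine ⟨p, q, hsp, hsq, hadd, hmass, le_antisymm ?_ ?_⟩
  · have := tvDist_le_of_add_eq_add hadd
    rwa [hmass, max_self, ← hmass] at this
  · obtain ⟨A, hA, hpA, hqA⟩ := s.toJordanDecomposition.mutuallySingular
    have hpAc : p Aᶜ = p Set.univ := by
      have := measure_add_measure_compl (μ := p) hA
      rwa [hpA, zero_add] at this
    have h5 := le_tvDist μ ν hA.compl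
    rw [key Aᶜ hA.compl, hpAc, hqA] at h5
    simpa [ENNReal.toReal_nonneg, abs_of_nonneg] using h5


end Sec1

section Sec2

variable {Ω : Type*} [MeasurableSpace Ω]
variable (S : ℝ → Measure Ω → Measure Ω)
variable (hSlin : ∀ t : ℝ, 0 ≤ t → ∀ (a b : ℝ≥0∞) (μ ν : Measure Ω),
      S t (a • μ + b • ν) = a • S t μ + b • S t ν)

lemma isFiniteMeasure_smul (c : ℝ≥0∞) (hc : c ≠ ∞) (μ : Measure Ω) [IsFiniteMeasure μ] :
    IsFiniteMeasure (c • μ) :=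
  ⟨by rw [Measure.smul_apply, smul_eq_mul]; exact ENNReal.mul_lt_top hc.lt_top (measure_lt_top μ _)⟩

include hSlin

lemma S_smul {t : ℝ} (ht : 0 ≤ t) (c : ℝ≥0∞) (μ : Measure Ω) :
    S t (c • μ) = c • S t μ := by
  have := hSlin t ht c 0 μ μ
  simpa using this

lemma S_add {t : ℝ} (ht : 0 ≤ t) (μ ν : Measure Ω) :
    S t (μ + ν) = S t μ + S t ν := by
  have := hSlin t ht 1 1 μ ν
  simpa using this

lemma S_zero {t : ℝ} (ht : 0 ≤ t) : S t 0 = 0 := by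
  have := hSlin t ht 0 0 0 0
  simpa using this

variable (hMarkov : ∀ t : ℝ, 0 ≤ t → ∀ μ : Measure Ω,
      IsProbabilityMeasure μ → IsProbabilityMeasure (S t μ))

include hMarkov

lemma S_mass {t : ℝ} (ht : 0 ≤ t) (p : Measure Ω) [IsFiniteMeasure p] :
    S t p Set.univ = p Set.univ := by
  rcases eq_or_ne (p Set.univ) 0 with h0 | h0
  · have hp0 : p = 0 := Measure.measure_univ_eq_zero.mp h0
    rw [hp0, S_zero S hSlin ht]
  · set c := p Set.univ with hc
    have hcne : c ≠ ∞ := measure_ne_top _ _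
    have hp1 : IsProbabilityMeasure (c⁻¹ • p) := by
      constructor
      rw [Measure.smul_apply, smul_eq_mul, ← hc, ENNReal.inv_mul_cancel h0 hcne]
    have hrec : p = c • (c⁻¹ • p) := by
      rw [smul_smul, ENNReal.mul_inv_cancel h0 hcne, one_smul]
    have := hMarkov t ht (c⁻¹ • p) hp1
    calc S t p Set.univ = (c • S t (c⁻¹ • p)) Set.univ := by
          rw [← S_smul S hSlin ht, ← hrec]
      _ = c * (S t (c⁻¹ • p)) Set.univ := by rw [Measure.smul_apply, smul_eq_mul]
      _ = c := by rw [this.measure_univ, mul_one]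
      _ = p Set.univ := rfl

lemma S_finite {t : ℝ} (ht : 0 ≤ t) (p : Measure Ω) [IsFiniteMeasure p] :
    IsFiniteMeasure (S t p) :=
  ⟨by rw [S_mass S hSlin hMarkov ht p]; exact measure_lt_top _ _⟩

omit hMarkov

lemma S_mono {t : ℝ} (ht : 0 ≤ t) {μ ν : Measure Ω} [IsFiniteMeasure μ]
    (h : μ ≤ ν) : S t μ ≤ S t ν := by
  have hsub : ν - μ + μ = ν := Measure.sub_add_cancel_of_le h
  calc S t μ ≤ S t (ν - μ) + S t μ := Measure.le_add_left le_rfl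
    _ = S t (ν - μ + μ) := (S_add S hSlin ht _ _).symm
    _ = S t ν := by rw [hsub]


end Sec2

section Sec3

variable {Ω : Type*} [MeasurableSpace Ω]


variable (S : ℝ → Measure Ω → Measure Ω)
variable (hSlin : ∀ t : ℝ, 0 ≤ t → ∀ (a b : ℝ≥0∞) (μ ν : Measure Ω),
      S t (a • μ + b • ν) = a • S t μ + b • S t ν)
variable (hMarkov : ∀ t : ℝ, 0 ≤ t → ∀ μ : Measure Ω,
      IsProbabilityMeasure μ → IsProbabilityMeasure (S t μ))


include hSlin hMarkov

lemma smul_mono {c : ℝ≥0∞} {m₁ m₂ : Measure Ω} (h : m₁ ≤ m₂) : c • m₁ ≤ c • m₂ :=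
  Measure.le_iff'.mpr fun s => by
    rw [Measure.smul_apply, Measure.smul_apply, smul_eq_mul, smul_eq_mul]
    exact mul_le_mul_right (Measure.le_iff'.mp h s) c

lemma S_nonexpansive {t : ℝ} (ht : 0 ≤ t) (μ ν : Measure Ω)
    [IsProbabilityMeasure μ] [IsProbabilityMeasure ν] :
    tvDist (S t μ) (S t ν) ≤ tvDist μ ν := by
  obtain ⟨p, q, hfp, hfq, hadd, hmass, htv⟩ := exists_jordan μ ν
  haveI := hfp; haveI := hfq
  haveI := S_finite S hSlin hMarkov ht p
  haveI := S_finite S hSlin hMarkov ht q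
  haveI := S_finite S hSlin hMarkov ht μ
  haveI := S_finite S hSlin hMarkov ht ν
  have hadd2 : S t μ + S t q = S t ν + S t p := by
    rw [← S_add S hSlin ht, ← S_add S hSlin ht, hadd]
  have hle := tvDist_le_of_add_eq_add hadd2
  rw [S_mass S hSlin hMarkov ht p, S_mass S hSlin hMarkov ht q, hmass, max_self, ← hmass,
    ← htv] at hle
  exact hle

variable (α : ℝ) (hα : α ∈ Set.Ioo (0:ℝ) 1) (η : Measure Ω) [IsProbabilityMeasure η]
variable (τ : ℝ) (hτ : 0 < τ)
variable (hDoeblin : ∀ μ : Measure Ω, IsProbabilityMeasure μ →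
      ENNReal.ofReal α • η ≤ S τ μ)

include hα hτ hDoeblin

lemma S_contraction (μ ν : Measure Ω)
    [IsProbabilityMeasure μ] [IsProbabilityMeasure ν] :
    tvDist (S τ μ) (S τ ν) ≤ (1 - α) * tvDist μ ν := by
  obtain ⟨p, q, hfp, hfq, hadd, hmass, htv⟩ := exists_jordan μ ν
  haveI := hfp; haveI := hfq
  haveI := S_finite S hSlin hMarkov hτ.le p
  haveI := S_finite S hSlin hMarkov hτ.le q
  haveI := S_finite S hSlin hMarkov hτ.le μ
  haveI := S_finite S hSlin hMarkov hτ.le ν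
  rcases eq_or_ne (p Set.univ) 0 with h0 | h0
  · -- degenerate case : μ = ν
    have hq0 : q Set.univ = 0 := by rw [← hmass, h0]
    have hp : p = 0 := Measure.measure_univ_eq_zero.mp h0
    have hq : q = 0 := Measure.measure_univ_eq_zero.mp hq0
    have hμν : μ = ν := by rw [hp, hq, add_zero, add_zero] at hadd; exact hadd
    rw [tvDist_self _ _ (by rw [hμν]), htv, h0]
    simp
  · set c := p Set.univ with hc
    have hcne : c ≠ ∞ := measure_ne_top _ _
    set β := ENNReal.ofReal α * c with hβ
    have hβne : β ≠ ∞ := ENNReal.mul_ne_top ENNReal.ofReal_ne_top hcne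
    haveI : IsFiniteMeasure (β • η) := isFiniteMeasure_smul β hβne η
    -- Doeblin lower bounds for S τ p and S τ q
    have hlow : ∀ m : Measure Ω, IsFiniteMeasure m → m Set.univ = c → β • η ≤ S τ m := by
      intro m hfm hm
      haveI := hfm
      haveI hm1 : IsProbabilityMeasure (c⁻¹ • m) := by
        constructor
        rw [Measure.smul_apply, smul_eq_mul, hm, ENNReal.inv_mul_cancel h0 hcne]
      have h1 : ENNReal.ofReal α • η ≤ S τ (c⁻¹ • m) := hDoeblin _ hm1
      have h2 : c • (ENNReal.ofReal α • η) ≤ c • S τ (c⁻¹ • m) :=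
        smul_mono S hSlin hMarkov h1
      have h3 : c • S τ (c⁻¹ • m) = S τ m := by
        rw [← S_smul S hSlin hτ.le, smul_smul, ENNReal.mul_inv_cancel h0 hcne, one_smul]
      rw [h3] at h2
      calc β • η = c • ENNReal.ofReal α • η := by rw [smul_smul, hβ, mul_comm]
        _ ≤ S τ m := h2
    have hlp : β • η ≤ S τ p := hlow p hfp rfl
    have hlq : β • η ≤ S τ q := hlow q hfq hmass.symm
    set p₂ := S τ p - β • η with hp₂
    set q₂ := S τ q - β • η with hq₂
    haveI : IsFiniteMeasure p₂ :=
      ⟨lt_of_le_of_lt (Measure.le_iff'.mp Measure.sub_le _) (measure_lt_top _ _)⟩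
    haveI : IsFiniteMeasure q₂ :=
      ⟨lt_of_le_of_lt (Measure.le_iff'.mp Measure.sub_le _) (measure_lt_top _ _)⟩
    have hpsub : p₂ + β • η = S τ p := Measure.sub_add_cancel_of_le hlp
    have hqsub : q₂ + β • η = S τ q := Measure.sub_add_cancel_of_le hlq
    have hadd2 : S τ μ + S τ q = S τ ν + S τ p := by
      rw [← S_add S hSlin hτ.le, ← S_add S hSlin hτ.le, hadd]
    have hcancel : S τ μ + q₂ = S τ ν + p₂ := by
      have h5 : (S τ μ + q₂) + β • η = (S τ ν + p₂) + β • η := by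
        rw [add_assoc, add_assoc, hqsub, hpsub]; exact hadd2
      ext E hE
      have h6 := congrArg (fun m : Measure Ω => m E) h5
      simp only [Measure.add_apply] at h6
      have h7 : (β • η) E ≠ ∞ := measure_ne_top _ _
      have h8 := (ENNReal.add_left_inj h7).mp h6
      simpa [Measure.add_apply] using h8
    have hle := tvDist_le_of_add_eq_add hcancel
    -- masses of p₂ and q₂
    have hβη : (β • η) Set.univ = β := by
      rw [Measure.smul_apply, smul_eq_mul, measure_univ, mul_one]
    have hβlec : β ≤ c := by
      rw [hβ]
      calc ENNReal.ofReal α * c ≤ 1 * c := by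
            exact mul_le_mul_left (by
              rw [← ENNReal.ofReal_one]
              exact ENNReal.ofReal_le_ofReal hα.2.le) c
        _ = c := one_mul c
    have hmassp : p₂ Set.univ = c - β := by
      rw [hp₂, Measure.sub_apply MeasurableSet.univ hlp, hβη,
        S_mass S hSlin hMarkov hτ.le p]
    have hmassq : q₂ Set.univ = c - β := by
      rw [hq₂, Measure.sub_apply MeasurableSet.univ hlq, hβη,
        S_mass S hSlin hMarkov hτ.le q, ← hmass]
    have htr : (c - β).toReal = (1 - α) * c.toReal := by
      rw [ENNReal.toReal_sub_of_le hβlec hcne, hβ, ENNReal.toReal_mul,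
        ENNReal.toReal_ofReal hα.1.le]
      ring
    rw [hmassp, hmassq, max_self, htr, ← htv] at hle
    exact hle


end Sec3

section Sec4

variable {Ω : Type*} [MeasurableSpace Ω]


lemma eq_of_le_mass {μ ν : Measure Ω} [IsFiniteMeasure ν] (h : μ ≤ ν)
    (hm : μ Set.univ = ν Set.univ) : μ = ν := by
  ext E hE
  have h1 : μ E ≤ ν E := Measure.le_iff'.mp h E
  have h2 : μ Eᶜ ≤ ν Eᶜ := Measure.le_iff'.mp h Eᶜ
  have ha : ν E + ν Eᶜ = μ E + μ Eᶜ := by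
    rw [measure_add_measure_compl hE, measure_add_measure_compl hE, hm]
  refine le_antisymm h1 ?_
  have h3 : ν E + ν Eᶜ ≤ μ E + ν Eᶜ := by
    rw [ha]; exact add_le_add_right h2 _
  exact (ENNReal.add_le_add_iff_right (measure_ne_top _ _)).mp h3

variable (S : ℝ → Measure Ω → Measure Ω)
variable (hSlin : ∀ t : ℝ, 0 ≤ t → ∀ (a b : ℝ≥0∞) (μ ν : Measure Ω),
      S t (a • μ + b • ν) = a • S t μ + b • S t ν)
    (hMarkov : ∀ t : ℝ, 0 ≤ t → ∀ μ : Measure Ω,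
      IsProbabilityMeasure μ → IsProbabilityMeasure (S t μ))
    (α : ℝ) (hα : α ∈ Set.Ioo (0:ℝ) 1)
    (η : Measure Ω) [IsProbabilityMeasure η]
    (τ : ℝ) (hτ : 0 < τ)
    (hDoeblin : ∀ μ : Measure Ω, IsProbabilityMeasure μ →
      ENNReal.ofReal α • η ≤ S τ μ)

include hSlin hMarkov hα hτ hDoeblin

lemma exists_invariant :
    ∃ μlim : Measure Ω, IsProbabilityMeasure μlim ∧ S τ μlim = μlim := by
  have hαne0 : ENNReal.ofReal α ≠ 0 := (ENNReal.ofReal_pos.mpr hα.1).ne'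
  have h1α0 : (0:ℝ) < 1 - α := by linarith [hα.2]
  have hβne0 : ENNReal.ofReal (1 - α) ≠ 0 := (ENNReal.ofReal_pos.mpr h1α0).ne'
  have hβnet : ENNReal.ofReal (1 - α) ≠ ∞ := ENNReal.ofReal_ne_top
  -- the residual chain
  set ρ : ℕ → Measure Ω := fun n =>
    Nat.rec η (fun _ m => (ENNReal.ofReal (1 - α))⁻¹ • (S τ m - ENNReal.ofReal α • η)) n
    with hρ
  have hρ0 : ρ 0 = η := rfl
  have hρs : ∀ n, ρ (n + 1) =
      (ENNReal.ofReal (1 - α))⁻¹ • (S τ (ρ n) - ENNReal.ofReal α • η) := fun n => rfl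
  haveI : IsFiniteMeasure (ENNReal.ofReal α • η) :=
    isFiniteMeasure_smul _ ENNReal.ofReal_ne_top η
  have hstep : ∀ n, IsProbabilityMeasure (ρ n) →
      (S τ (ρ n) = ENNReal.ofReal α • η + ENNReal.ofReal (1 - α) • ρ (n + 1)) ∧
      IsProbabilityMeasure (ρ (n + 1)) := by
    intro n hn
    haveI := hn
    haveI : IsProbabilityMeasure (S τ (ρ n)) := hMarkov τ hτ.le _ hn
    have hdoe : ENNReal.ofReal α • η ≤ S τ (ρ n) := hDoeblin _ hn
    have hmass_sub : (S τ (ρ n) - ENNReal.ofReal α • η) Set.univ = ENNReal.ofReal (1 - α) := by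
      rw [Measure.sub_apply MeasurableSet.univ hdoe, (hMarkov τ hτ.le _ hn).measure_univ,
        Measure.smul_apply, smul_eq_mul, measure_univ, mul_one]
      rw [ENNReal.ofReal_sub 1 hα.1.le, ENNReal.ofReal_one]
    have hsmul : ENNReal.ofReal (1 - α) • ρ (n + 1) = S τ (ρ n) - ENNReal.ofReal α • η := by
      rw [hρs n, smul_smul, ENNReal.mul_inv_cancel hβne0 hβnet, one_smul]
    constructor
    · rw [hsmul, add_comm, Measure.sub_add_cancel_of_le hdoe]
    · constructor
      rw [hρs n, Measure.smul_apply, smul_eq_mul, hmass_sub,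
        ENNReal.inv_mul_cancel hβne0 hβnet]
  have hprob : ∀ n, IsProbabilityMeasure (ρ n) := by
    intro n
    induction n with
    | zero => rw [hρ0]; infer_instance
    | succ n ih => exact (hstep n ih).2
  have hdecomp : ∀ n, S τ (ρ n) =
      ENNReal.ofReal α • η + ENNReal.ofReal (1 - α) • ρ (n + 1) :=
    fun n => (hstep n (hprob n)).1
  -- geometric weights
  set c : ℕ → ℝ≥0∞ := fun n => ENNReal.ofReal α * ENNReal.ofReal (1 - α) ^ n with hcdef
  have hβlt1 : ENNReal.ofReal (1 - α) < 1 := by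
    rw [← ENNReal.ofReal_one]
    exact (ENNReal.ofReal_lt_ofReal_iff one_pos).mpr (by linarith [hα.1])
  have hcsum : ∑' n, c n = 1 := by
    rw [hcdef]
    simp only []
    rw [ENNReal.tsum_mul_left, ENNReal.tsum_geometric]
    have h1 : (1 : ℝ≥0∞) - ENNReal.ofReal (1 - α) = ENNReal.ofReal α := by
      rw [← ENNReal.ofReal_one, ← ENNReal.ofReal_sub 1 h1α0.le]
      norm_num
    rw [h1, ENNReal.mul_inv_cancel hαne0 ENNReal.ofReal_ne_top]
  set μlim := Measure.sum (fun n => c n • ρ n) with hμlim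
  have happly : ∀ E : Set Ω, MeasurableSet E → μlim E = ∑' n, c n * ρ n E := by
    intro E hE
    rw [hμlim, Measure.sum_apply _ hE]
    exact tsum_congr fun n => by rw [Measure.smul_apply, smul_eq_mul]
  haveI hμprob : IsProbabilityMeasure μlim := by
    constructor
    rw [happly _ MeasurableSet.univ]
    have : ∀ n, c n * ρ n Set.univ = c n := by
      intro n
      haveI := hprob n
      rw [measure_univ, mul_one]
    rw [tsum_congr this, hcsum]
  -- Claim A : ∑' n, c n * S τ (ρ n) E = μlim E
  have hc1 : ∀ n, c n * ENNReal.ofReal (1 - α) = c (n + 1) := by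
    intro n; rw [hcdef]; ring
  have hA : ∀ E : Set Ω, MeasurableSet E → ∑' n, c n * S τ (ρ n) E = μlim E := by
    intro E hE
    have h1 : ∀ n, c n * S τ (ρ n) E
        = ENNReal.ofReal α * η E * c n + c (n + 1) * ρ (n + 1) E := by
      intro n
      rw [hdecomp n, Measure.add_apply, Measure.smul_apply, Measure.smul_apply,
        smul_eq_mul, smul_eq_mul, mul_add, ← hc1 n]
      ring
    calc ∑' n, c n * S τ (ρ n) E
        = ∑' n, (ENNReal.ofReal α * η E * c n + c (n + 1) * ρ (n + 1) E) := tsum_congr h1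
      _ = (∑' n, ENNReal.ofReal α * η E * c n) + ∑' n, c (n + 1) * ρ (n + 1) E :=
          ENNReal.tsum_add
      _ = ENNReal.ofReal α * η E + ∑' n, c (n + 1) * ρ (n + 1) E := by
          rw [ENNReal.tsum_mul_left, hcsum, mul_one]
      _ = c 0 * ρ 0 E + ∑' n, c (n + 1) * ρ (n + 1) E := by
          congr 1
          rw [hρ0, hcdef]
          simp
      _ = ∑' n, c n * ρ n E :=
          (tsum_eq_zero_add' (f := fun n => c n * ρ n E) ENNReal.summable).symm
      _ = μlim E := (happly E hE).symm
  -- partial sums are below μlim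
  have hpart : ∀ N : ℕ, (∑ n ∈ Finset.range N, c n • ρ n) ≤ μlim := by
    intro N
    rw [Measure.le_iff]
    intro E hE
    rw [Measure.finset_sum_apply, happly E hE]
    exact ENNReal.sum_le_tsum _
  have hfinsum : ∀ N : ℕ, S τ (∑ n ∈ Finset.range N, c n • ρ n)
      = ∑ n ∈ Finset.range N, c n • S τ (ρ n) := by
    intro N
    induction N with
    | zero => simp [S_zero S hSlin hτ.le]
    | succ N ih =>
        rw [Finset.sum_range_succ, Finset.sum_range_succ, S_add S hSlin hτ.le, ih,
          S_smul S hSlin hτ.le]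
  have hfinmeas : ∀ N : ℕ, IsFiniteMeasure (∑ n ∈ Finset.range N, c n • ρ n) := by
    intro N
    constructor
    rw [Measure.finset_sum_apply]
    refine ENNReal.sum_lt_top.mpr fun n _ => ?_
    haveI := hprob n
    rw [Measure.smul_apply, smul_eq_mul, measure_univ, mul_one]
    have : c n ≠ ∞ := by
      rw [hcdef]
      exact ENNReal.mul_ne_top ENNReal.ofReal_ne_top
        (ENNReal.pow_ne_top ENNReal.ofReal_ne_top)
    exact this.lt_top
  have hfinle : ∀ N : ℕ, (∑ n ∈ Finset.range N, c n • S τ (ρ n)) ≤ S τ μlim := by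
    intro N
    haveI := hfinmeas N
    rw [← hfinsum N]
    exact S_mono S hSlin hτ.le (hpart N)
  have hlelim : μlim ≤ S τ μlim := by
    rw [Measure.le_iff]
    intro E hE
    rw [← hA E hE, ENNReal.tsum_eq_iSup_nat]
    refine iSup_le fun N => ?_
    have h2 := Measure.le_iff'.mp (hfinle N) E
    rw [Measure.finset_sum_apply] at h2
    calc ∑ n ∈ Finset.range N, c n * S τ (ρ n) E
        = ∑ n ∈ Finset.range N, (c n • S τ (ρ n)) E := by
          refine Finset.sum_congr rfl fun n _ => ?_
          rw [Measure.smul_apply, smul_eq_mul]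
      _ ≤ S τ μlim E := h2
  haveI hSprob : IsProbabilityMeasure (S τ μlim) := hMarkov τ hτ.le _ hμprob
  have hfix : S τ μlim = μlim :=
    (eq_of_le_mass hlelim (by rw [hμprob.measure_univ, hSprob.measure_univ])).symm
  exact ⟨μlim, hμprob, hfix⟩


end Sec4

section Sec5

variable {Ω : Type*} [MeasurableSpace Ω]


lemma pow_floor_bound {α τ t : ℝ} (hα : α ∈ Set.Ioo (0:ℝ) 1) (hτ : 0 < τ) :
    (1 - α) ^ (⌊t / τ⌋₊ : ℕ) ≤ 1 / (1 - α) * Real.exp (-(-Real.log (1 - α) / τ) * t) := by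
  set β := 1 - α with hβ
  have hβ0 : 0 < β := by rw [hβ]; linarith [hα.2]
  have hβ1 : β < 1 := by rw [hβ]; linarith [hα.1]
  have hlog : Real.log β < 0 := Real.log_neg hβ0 hβ1
  have hn : t / τ - 1 ≤ (⌊t / τ⌋₊ : ℝ) := by
    have := Nat.lt_floor_add_one (t / τ)
    linarith
  have hexp : β ^ (⌊t / τ⌋₊ : ℕ) = Real.exp ((⌊t / τ⌋₊ : ℝ) * Real.log β) := by
    rw [Real.exp_nat_mul, Real.exp_log hβ0]
  have harg : -(-Real.log β / τ) * t = t / τ * Real.log β := by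
    field_simp
  have hrhs : 1 / β * Real.exp (-(-Real.log β / τ) * t)
      = Real.exp ((t / τ - 1) * Real.log β) := by
    rw [harg, one_div, ← Real.exp_log (inv_pos.mpr hβ0), ← Real.exp_add, Real.log_inv]
    congr 1
    ring
  rw [hexp, hrhs]
  apply Real.exp_le_exp.mpr
  nlinarith [hn, hlog]


variable (S : ℝ → Measure Ω → Measure Ω)
    (hS0 : ∀ μ : Measure Ω, S 0 μ = μ)
    (hSsem : ∀ s t : ℝ, 0 ≤ s → 0 ≤ t → ∀ μ : Measure Ω, S (s + t) μ = S s (S t μ))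
    (hSlin : ∀ t : ℝ, 0 ≤ t → ∀ (a b : ℝ≥0∞) (μ ν : Measure Ω),
      S t (a • μ + b • ν) = a • S t μ + b • S t ν)
    (hMarkov : ∀ t : ℝ, 0 ≤ t → ∀ μ : Measure Ω,
      IsProbabilityMeasure μ → IsProbabilityMeasure (S t μ))
    (α : ℝ) (hα : α ∈ Set.Ioo (0:ℝ) 1)
    (η : Measure Ω) [IsProbabilityMeasure η]
    (τ : ℝ) (hτ : 0 < τ)
    (hDoeblin : ∀ μ : Measure Ω, IsProbabilityMeasure μ →
      ENNReal.ofReal α • η ≤ S τ μ)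

include hS0 hSsem hSlin hMarkov hα hτ hDoeblin

lemma S_iterate (n : ℕ) (μ ν : Measure Ω)
    [IsProbabilityMeasure μ] [IsProbabilityMeasure ν] :
    tvDist (S ((n : ℝ) * τ) μ) (S ((n : ℝ) * τ) ν) ≤ (1 - α) ^ n * tvDist μ ν := by
  induction n with
  | zero =>
      simp only [Nat.cast_zero, zero_mul, pow_zero, one_mul, hS0]
      exact le_refl _
  | succ n ih =>
      have hnτ : (0:ℝ) ≤ (n : ℝ) * τ := by positivity
      have hsplit : S (((n+1 : ℕ) : ℝ) * τ) μ = S τ (S ((n : ℝ) * τ) μ) := by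
        have h1 : ((n+1 : ℕ) : ℝ) * τ = τ + (n : ℝ) * τ := by push_cast; ring
        rw [h1, hSsem τ ((n : ℝ) * τ) hτ.le hnτ]
      have hsplit' : S (((n+1 : ℕ) : ℝ) * τ) ν = S τ (S ((n : ℝ) * τ) ν) := by
        have h1 : ((n+1 : ℕ) : ℝ) * τ = τ + (n : ℝ) * τ := by push_cast; ring
        rw [h1, hSsem τ ((n : ℝ) * τ) hτ.le hnτ]
      haveI := hMarkov ((n : ℝ) * τ) hnτ μ inferInstance
      haveI := hMarkov ((n : ℝ) * τ) hnτ ν inferInstance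
      rw [hsplit, hsplit']
      calc tvDist (S τ (S ((n : ℝ) * τ) μ)) (S τ (S ((n : ℝ) * τ) ν))
          ≤ (1 - α) * tvDist (S ((n : ℝ) * τ) μ) (S ((n : ℝ) * τ) ν) :=
            S_contraction S hSlin hMarkov α hα η τ hτ hDoeblin _ _
        _ ≤ (1 - α) * ((1 - α) ^ n * tvDist μ ν) := by
            have h2 : (0:ℝ) ≤ 1 - α := by linarith [hα.2]
            exact mul_le_mul_of_nonneg_left ih h2
        _ = (1 - α) ^ (n + 1) * tvDist μ ν := by ring

theorem doeblin_main :
    ∃ μlim : Measure Ω,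
      (IsProbabilityMeasure μlim ∧ ∀ t : ℝ, 0 ≤ t → S t μlim = μlim) ∧
      (∀ ν : Measure Ω, IsProbabilityMeasure ν → (∀ t : ℝ, 0 ≤ t → S t ν = ν) → ν = μlim) ∧
      (∀ μ : Measure Ω, IsProbabilityMeasure μ → ∀ t : ℝ, 0 ≤ t →
        tvDist (S t μ) μlim ≤
          (1 / (1 - α)) * Real.exp (-(-Real.log (1 - α) / τ) * t) * tvDist μ μlim) := by
  obtain ⟨μlim, hμprob, hfix⟩ := exists_invariant S hSlin hMarkov α hα η τ hτ hDoeblin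
  haveI := hμprob
  -- uniqueness of fixed points of S τ among probability measures
  have huniq : ∀ ν : Measure Ω, IsProbabilityMeasure ν → S τ ν = ν → ν = μlim := by
    intro ν hν hνfix
    haveI := hν
    have hd := S_contraction S hSlin hMarkov α hα η τ hτ hDoeblin ν μlim
    rw [hνfix, hfix] at hd
    have h0 : 0 ≤ tvDist ν μlim := tvDist_nonneg ν μlim
    have hz : tvDist ν μlim = 0 := by nlinarith [hα.1]
    exact eq_of_tvDist_eq_zero ν μlim hz
  -- invariance for all times
  have hinv : ∀ t : ℝ, 0 ≤ t → S t μlim = μlim := by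
    intro t ht
    haveI := hMarkov t ht μlim hμprob
    refine huniq (S t μlim) inferInstance ?_
    calc S τ (S t μlim) = S (τ + t) μlim := (hSsem τ t hτ.le ht μlim).symm
      _ = S (t + τ) μlim := by rw [add_comm]
      _ = S t (S τ μlim) := hSsem t τ ht hτ.le μlim
      _ = S t μlim := by rw [hfix]
  refine ⟨μlim, ⟨hμprob, hinv⟩, ?_, ?_⟩
  · intro ν hν hνinv
    exact huniq ν hν (hνinv τ hτ.le)
  · intro μ hμ t ht
    haveI := hμ
    set n : ℕ := ⌊t / τ⌋₊ with hn
    have hnτ : (n : ℝ) * τ ≤ t := by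
      have h1 : (n : ℝ) ≤ t / τ := Nat.floor_le (div_nonneg ht hτ.le)
      calc (n : ℝ) * τ ≤ t / τ * τ := mul_le_mul_of_nonneg_right h1 hτ.le
        _ = t := by field_simp
    set r : ℝ := t - (n : ℝ) * τ with hr
    have hr0 : 0 ≤ r := by rw [hr]; linarith
    have hnτ0 : (0:ℝ) ≤ (n : ℝ) * τ := by positivity
    haveI := hMarkov r hr0 μ hμ
    have hsplitμ : S t μ = S ((n : ℝ) * τ) (S r μ) := by
      have h1 : t = (n : ℝ) * τ + r := by rw [hr]; ring
      rw [h1, hSsem _ _ hnτ0 hr0]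
    have hμliml : μlim = S ((n : ℝ) * τ) (S r μlim) := by
      rw [hinv r hr0, hinv ((n : ℝ) * τ) hnτ0]
    haveI := hMarkov r hr0 μlim hμprob
    have hbound1 : tvDist (S t μ) μlim ≤ (1 - α) ^ n * tvDist (S r μ) (S r μlim) := by
      rw [hsplitμ]
      conv_lhs => rw [hμliml]
      exact S_iterate S hS0 hSsem hSlin hMarkov α hα η τ hτ hDoeblin n (S r μ) (S r μlim)
    have hbound2 : tvDist (S r μ) (S r μlim) ≤ tvDist μ μlim :=
      S_nonexpansive S hSlin hMarkov hr0 μ μlim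
    have hpow : (0:ℝ) ≤ (1 - α) ^ n := by
      have : (0:ℝ) ≤ 1 - α := by linarith [hα.2]
      positivity
    have hfloor := pow_floor_bound (t := t) hα hτ
    have htv0 : 0 ≤ tvDist μ μlim := tvDist_nonneg μ μlim
    calc tvDist (S t μ) μlim ≤ (1 - α) ^ n * tvDist (S r μ) (S r μlim) := hbound1
      _ ≤ (1 - α) ^ n * tvDist μ μlim := mul_le_mul_of_nonneg_left hbound2 hpow
      _ ≤ (1 / (1 - α)) * Real.exp (-(-Real.log (1 - α) / τ) * t) * tvDist μ μlim :=
          mul_le_mul_of_nonneg_right hfloor htv0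


end Sec5

end DoeblinAux


/-- **Doeblin's theorem.** If a Markov semigroup satisfies `S τ μ ≥ α η`
for all probability measures `μ`, then it has a unique invariant probability measure
`μlim` and converges exponentially to it in total variation, with
`C = 1/(1−α)` and `λ = −log(1−α)/τ`. -/
theorem doeblin_theorem
    {Ω : Type*} [MeasurableSpace Ω]
    (S : ℝ → Measure Ω → Measure Ω)
    (hS0 : ∀ μ, S 0 μ = μ)
    (hSsem : ∀ s t : ℝ, 0 ≤ s → 0 ≤ t → ∀ μ, S (s + t) μ = S s (S t μ))
    (hSlin : ∀ t : ℝ, 0 ≤ t → ∀ (a b : ℝ≥0∞) (μ ν : Measure Ω),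
      S t (a • μ + b • ν) = a • S t μ + b • S t ν)
    (hMarkov : ∀ t : ℝ, 0 ≤ t → ∀ μ : Measure Ω,
      IsProbabilityMeasure μ → IsProbabilityMeasure (S t μ))
    (α : ℝ) (hα : α ∈ Set.Ioo (0:ℝ) 1)
    (η : Measure Ω) [IsProbabilityMeasure η]
    (τ : ℝ) (hτ : 0 < τ)
    (hDoeblin : ∀ μ : Measure Ω, IsProbabilityMeasure μ →
      ENNReal.ofReal α • η ≤ S τ μ) :
    ∃ μlim : Measure Ω,
      (IsProbabilityMeasure μlim ∧ ∀ t : ℝ, 0 ≤ t → S t μlim = μlim) ∧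
      (∀ ν : Measure Ω, IsProbabilityMeasure ν → (∀ t : ℝ, 0 ≤ t → S t ν = ν) → ν = μlim) ∧
      (∀ μ : Measure Ω, IsProbabilityMeasure μ → ∀ t : ℝ, 0 ≤ t →
        tvDist (S t μ) μlim ≤
          (1 / (1 - α)) * Real.exp (-(-Real.log (1 - α) / τ) * t) * tvDist μ μlim) := by
  exact DoeblinAux.doeblin_main S hS0 hSsem hSlin hMarkov α hα η τ hτ hDoeblin
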